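/- Let θ, z : (a,b) → ℝ be C¹ functions satisfying θ'(t) = √(1 - cos²θ(t)/z(t)²) > 0 and z'(t) = sin θ(t) on (a,b), with z > |cos θ|, and suppose θ(t) → 0 and z(t) → 1 as t → a⁺. Then (z(t) - cos θ(t))/sin θ(t) → 0 as t → a⁺. -/

import Mathlib

open Filter Set Real Topology

theorem ratio_tendsto_zero (a b : ℝ) (θ z θ' : ℝ → ℝ)
    (hdom : ∀ t ∈ Set.Ioo a b, |Real.cos (θ t)| < z t)
    (hθ : ∀ t ∈ Set.Ioo a b, HasDerivAt θ (θ' t) t)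
    (hθ'eq : ∀ t ∈ Set.Ioo a b,
      θ' t = Real.sqrt (1 - (Real.cos (θ t)) ^ 2 / (z t) ^ 2))
    (hθ'pos : ∀ t ∈ Set.Ioo a b, 0 < θ' t)
    (hz' : ∀ t ∈ Set.Ioo a b, HasDerivAt z (Real.sin (θ t)) t)
    (hθlim : Filter.Tendsto θ (nhdsWithin a (Set.Ioo a b)) (nhds 0))
    (hzlim : Filter.Tendsto z (nhdsWithin a (Set.Ioo a b)) (nhds 1)) :
    Filter.Tendsto (fun t => (z t - Real.cos (θ t)) / Real.sin (θ t))
      (nhdsWithin a (Set.Ioo a b)) (nhds 0) := by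
  rcases le_or_gt b a with hba | hab
  · rw [Set.Ioo_eq_empty (not_lt.mpr hba), nhdsWithin_empty]
    exact tendsto_bot
  -- θ is positive on (a,b)
  have hθcont : ContinuousOn θ (Set.Ioo a b) := fun t ht =>
    (hθ t ht).continuousAt.continuousWithinAt
  have hmonoθ : StrictMonoOn θ (Set.Ioo a b) := by
    refine strictMonoOn_of_deriv_pos (convex_Ioo a b) hθcont ?_
    intro x hx
    rw [interior_Ioo] at hx
    rw [(hθ x hx).deriv]
    exact hθ'pos x hx
  have hθpos : ∀ t ∈ Set.Ioo a b, 0 < θ t := by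
    intro t ht
    have hs : (a + t) / 2 ∈ Set.Ioo a t := ⟨by linarith [ht.1], by linarith [ht.1]⟩
    set s := (a + t) / 2
    have hsab : s ∈ Set.Ioo a b := ⟨hs.1, hs.2.trans ht.2⟩
    have h1 : θ s < θ t := hmonoθ hsab ht hs.2
    have h2 : (0 : ℝ) ≤ θ s := by
      have hsub : Set.Ioo a s ⊆ Set.Ioo a b := Set.Ioo_subset_Ioo le_rfl hsab.2.le
      have hlim : Filter.Tendsto θ (nhdsWithin a (Set.Ioo a s)) (nhds 0) :=
        hθlim.mono_left (nhdsWithin_mono a hsub)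
      have hne : (nhdsWithin a (Set.Ioo a s)).NeBot := by
        apply mem_closure_iff_nhdsWithin_neBot.mp
        rw [closure_Ioo (ne_of_lt hs.1)]
        exact ⟨le_rfl, hs.1.le⟩
      refine le_of_tendsto hlim ?_
      refine eventually_mem_nhdsWithin.mono fun u hu => ?_
      exact (hmonoθ ⟨hu.1, hu.2.trans hsab.2⟩ hsab hu.2).le
    linarith
  have hfpos : ∀ t ∈ Set.Ioo a b, 0 < z t - Real.cos (θ t) := by
    intro t ht
    have h1 := hdom t ht
    have h2 := le_abs_self (Real.cos (θ t))
    linarith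
  -- choose c close to a where bounds hold
  have hev : ∀ᶠ t in nhds a, t ∈ Set.Ioo a b → (|θ t| < 1/2 ∧ |z t - 1| < 1/10) := by
    have h1 := Metric.tendsto_nhds.mp hθlim (1/2) (by norm_num)
    have h2 := Metric.tendsto_nhds.mp hzlim (1/10) (by norm_num)
    have h3 := h1.and h2
    rw [eventually_nhdsWithin_iff] at h3
    refine h3.mono fun t h ht => ?_
    obtain ⟨ha1, ha2⟩ := h ht
    rw [Real.dist_eq] at ha1 ha2
    exact ⟨by simpa using ha1, ha2⟩
  obtain ⟨ε, hε, hball⟩ := Metric.eventually_nhds_iff.mp hev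
  set c := min (a + ε) b with hc
  have hac : a < c := lt_min (by linarith) hab
  have hcb : c ≤ b := min_le_right _ _
  have hIcc : Set.Ioo a c ⊆ Set.Ioo a b := Set.Ioo_subset_Ioo le_rfl hcb
  have hbounds : ∀ t ∈ Set.Ioo a c, |θ t| < 1/2 ∧ |z t - 1| < 1/10 := by
    intro t ht
    refine hball ?_ (hIcc ht)
    rw [Real.dist_eq, abs_of_pos (by linarith [ht.1])]
    have h1 : t < a + ε := lt_of_lt_of_le ht.2 (min_le_left _ _)
    linarith
  -- the comparison function v
  set v : ℝ → ℝ := fun t => (z t - Real.cos (θ t)) ^ ((3:ℝ)/2) - 2 * θ t ^ 2 with hvdef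
  have hvD : ∀ t ∈ Set.Ioo a c, HasDerivAt v
      (Real.sin (θ t) * (1 + θ' t) * ((3:ℝ)/2) * (z t - Real.cos (θ t)) ^ ((3:ℝ)/2 - 1)
        - 4 * (θ t * θ' t)) t := by
    intro t ht
    have htab := hIcc ht
    have hfD : HasDerivAt (fun t => z t - Real.cos (θ t)) (Real.sin (θ t) * (1 + θ' t)) t := by
      have h1 : HasDerivAt (fun t => Real.cos (θ t)) (-Real.sin (θ t) * θ' t) t :=
        (Real.hasDerivAt_cos (θ t)).comp t (hθ t htab)
      have h2 := (hz' t htab).sub h1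
      refine h2.congr_deriv ?_
      ring
    have h3 := hfD.rpow_const (p := (3:ℝ)/2) (Or.inl (ne_of_gt (hfpos t htab)))
    have h4 := ((hθ t htab).pow 2).const_mul (2:ℝ)
    have h5 := h3.sub h4
    refine h5.congr_deriv ?_
    push_cast
    ring
  -- the derivative is nonpositive
  have hv'le : ∀ t ∈ Set.Ioo a c,
      Real.sin (θ t) * (1 + θ' t) * ((3:ℝ)/2) * (z t - Real.cos (θ t)) ^ ((3:ℝ)/2 - 1)
        - 4 * (θ t * θ' t) ≤ 0 := by
    intro t ht
    have htab := hIcc ht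
    obtain ⟨hb1, hb2⟩ := hbounds t ht
    have hθp := hθpos t htab
    have hθh : θ t < 1/2 := by
      have := abs_lt.mp hb1
      linarith [this.2]
    have hz1 : 9/10 < z t := by have := abs_lt.mp hb2; linarith [this.1]
    have hz2 : z t < 11/10 := by have := abs_lt.mp hb2; linarith [this.2]
    have hfp := hfpos t htab
    have hcos : 7/8 ≤ Real.cos (θ t) := by
      have h1 := Real.one_sub_sq_div_two_le_cos (x := θ t)
      nlinarith
    have hzsq : z t ^ 2 ≤ z t + Real.cos (θ t) := by nlinarith
    have hθ'1 : θ' t ≤ 1 := by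
      rw [hθ'eq t htab]
      refine Real.sqrt_le_one.mpr ?_
      have : (0:ℝ) ≤ Real.cos (θ t) ^ 2 / z t ^ 2 := by positivity
      linarith
    have hsq : Real.sqrt (z t - Real.cos (θ t)) ≤ θ' t := by
      rw [hθ'eq t htab]
      refine Real.sqrt_le_sqrt ?_
      have hz2p : (0:ℝ) < z t ^ 2 := by positivity
      have hdv : Real.cos (θ t) ^ 2 / z t ^ 2 ≤ 1 - (z t - Real.cos (θ t)) := by
        rw [div_le_iff₀ hz2p]
        nlinarith [mul_le_mul_of_nonneg_left hzsq hfp.le]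
      linarith
    have hsnn : (0:ℝ) ≤ Real.sin (θ t) :=
      Real.sin_nonneg_of_nonneg_of_le_pi hθp.le (by linarith [Real.pi_gt_three])
    have hsle := Real.sin_le hθp.le
    have hf'le : Real.sin (θ t) * (1 + θ' t) ≤ 2 * θ t := by
      nlinarith [mul_le_mul_of_nonneg_left hθ'1 hsnn]
    have hpow : (z t - Real.cos (θ t)) ^ ((3:ℝ)/2 - 1) = Real.sqrt (z t - Real.cos (θ t)) := by
      rw [Real.sqrt_eq_rpow]
      norm_num
    rw [hpow]
    set S := Real.sqrt (z t - Real.cos (θ t)) with hS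
    have hSnn : (0:ℝ) ≤ S := Real.sqrt_nonneg _
    nlinarith [mul_le_mul_of_nonneg_right hf'le hSnn,
      mul_le_mul_of_nonneg_left hsq (by positivity : (0:ℝ) ≤ 4 * θ t),
      mul_nonneg hθp.le hSnn]
  -- v is antitone on (a,c)
  have hanti : AntitoneOn v (Set.Ioo a c) := by
    refine antitoneOn_of_deriv_nonpos (convex_Ioo a c)
      (fun t ht => (hvD t ht).continuousAt.continuousWithinAt)
      (fun x hx => ((hvD x (by rwa [interior_Ioo] at hx)).differentiableAt).differentiableWithinAt)
      ?_
    intro x hx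
    rw [interior_Ioo] at hx
    rw [(hvD x hx).deriv]
    exact hv'le x hx
  -- v tends to 0 at a
  have hflim : Filter.Tendsto (fun t => z t - Real.cos (θ t))
      (nhdsWithin a (Set.Ioo a b)) (nhds 0) := by
    have hcos : Filter.Tendsto (fun t => Real.cos (θ t))
        (nhdsWithin a (Set.Ioo a b)) (nhds 1) := by
      have := (Real.continuous_cos.tendsto 0).comp hθlim
      simpa [Function.comp_def] using this
    simpa using hzlim.sub hcos
  have hvlim : Filter.Tendsto v (nhdsWithin a (Set.Ioo a b)) (nhds 0) := by
    have h1 : Filter.Tendsto (fun t => (z t - Real.cos (θ t)) ^ ((3:ℝ)/2))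
        (nhdsWithin a (Set.Ioo a b)) (nhds 0) := by
      have := hflim.rpow_const (p := (3:ℝ)/2) (Or.inr (by norm_num))
      rwa [Real.zero_rpow (by norm_num)] at this
    have h2 : Filter.Tendsto (fun t => 2 * θ t ^ 2)
        (nhdsWithin a (Set.Ioo a b)) (nhds 0) := by
      have := (hθlim.pow 2).const_mul (2:ℝ)
      simpa using this
    simpa using h1.sub h2
  -- hence v ≤ 0 on (a,c)
  have hvle : ∀ t ∈ Set.Ioo a c, v t ≤ 0 := by
    intro t ht
    have hsub : Set.Ioo a t ⊆ Set.Ioo a b :=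
      Set.Ioo_subset_Ioo le_rfl (le_of_lt (lt_of_lt_of_le ht.2 hcb))
    have hlim2 : Filter.Tendsto v (nhdsWithin a (Set.Ioo a t)) (nhds 0) :=
      hvlim.mono_left (nhdsWithin_mono a hsub)
    have hne : (nhdsWithin a (Set.Ioo a t)).NeBot := by
      apply mem_closure_iff_nhdsWithin_neBot.mp
      rw [closure_Ioo (ne_of_lt ht.1)]
      exact ⟨le_rfl, ht.1.le⟩
    refine ge_of_tendsto hlim2 ?_
    refine eventually_mem_nhdsWithin.mono fun s hs => ?_
    exact hanti ⟨hs.1, hs.2.trans ht.2⟩ ht hs.2.le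
  -- final squeeze
  have hevc : ∀ᶠ t in nhdsWithin a (Set.Ioo a b), t ∈ Set.Ioo a c := by
    have h1 : ∀ᶠ t in nhdsWithin a (Set.Ioo a b), t < c :=
      (eventually_lt_nhds hac).filter_mono nhdsWithin_le_nhds
    filter_upwards [h1, eventually_mem_nhdsWithin] with t h1 h2
    exact ⟨h2.1, h1⟩
  refine squeeze_zero' (g := fun t => 4 * θ t ^ ((1:ℝ)/3)) ?_ ?_ ?_
  · filter_upwards [hevc] with t ht
    have htab := hIcc ht
    have hθh : θ t < 1/2 := by
      have := abs_lt.mp (hbounds t ht).1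
      linarith [this.2]
    have hsinpos : 0 < Real.sin (θ t) :=
      Real.sin_pos_of_pos_of_lt_pi (hθpos t htab) (by linarith [Real.pi_gt_three])
    exact div_nonneg (hfpos t htab).le hsinpos.le
  · filter_upwards [hevc] with t ht
    have htab := hIcc ht
    have hθp := hθpos t htab
    have hθh : θ t < 1/2 := by
      have := abs_lt.mp (hbounds t ht).1
      linarith [this.2]
    have hsin : θ t / 2 ≤ Real.sin (θ t) := by
      have := Real.sin_gt_sub_cube hθp
      nlinarith [mul_pos hθp hθp, mul_lt_mul_of_pos_left hθh hθp, sq_nonneg (θ t)]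
    have hsinpos : 0 < Real.sin (θ t) := by linarith
    have hfnn := (hfpos t htab).le
    have hv0 := hvle t ht
    have hf32 : (z t - Real.cos (θ t)) ^ ((3:ℝ)/2) ≤ 2 * θ t ^ 2 := by
      have : (z t - Real.cos (θ t)) ^ ((3:ℝ)/2) - 2 * θ t ^ 2 ≤ 0 := hv0
      linarith
    have h1 : ((z t - Real.cos (θ t)) ^ ((3:ℝ)/2)) ^ ((2:ℝ)/3) ≤ (2 * θ t ^ 2) ^ ((2:ℝ)/3) :=
      Real.rpow_le_rpow (Real.rpow_nonneg hfnn _) hf32 (by norm_num)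
    have h2 : ((z t - Real.cos (θ t)) ^ ((3:ℝ)/2)) ^ ((2:ℝ)/3) = z t - Real.cos (θ t) := by
      rw [← Real.rpow_mul hfnn]
      norm_num
    have h3 : (2 * θ t ^ 2 : ℝ) ^ ((2:ℝ)/3) ≤ 2 * θ t ^ ((4:ℝ)/3) := by
      rw [Real.mul_rpow (by norm_num) (by positivity)]
      have e1 : ((θ t ^ 2 : ℝ)) ^ ((2:ℝ)/3) = θ t ^ ((4:ℝ)/3) := by
        rw [← Real.rpow_natCast (θ t) 2, ← Real.rpow_mul hθp.le]
        norm_num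
      rw [e1]
      have h4 : (2:ℝ) ^ ((2:ℝ)/3) ≤ 2 := by
        calc (2:ℝ) ^ ((2:ℝ)/3) ≤ 2 ^ (1:ℝ) :=
              Real.rpow_le_rpow_of_exponent_le (by norm_num) (by norm_num)
        _ = 2 := Real.rpow_one 2
      exact mul_le_mul_of_nonneg_right h4 (Real.rpow_nonneg hθp.le _)
    have hfle : z t - Real.cos (θ t) ≤ 2 * θ t ^ ((4:ℝ)/3) := by
      rw [← h2]; linarith
    have hstep : (z t - Real.cos (θ t)) / Real.sin (θ t) ≤ (2 * θ t ^ ((4:ℝ)/3)) / (θ t / 2) :=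
      div_le_div₀ (by positivity) hfle (by linarith) hsin
    refine hstep.trans (le_of_eq ?_)
    have e2 : θ t ^ ((4:ℝ)/3) = θ t ^ ((1:ℝ)/3) * θ t := by
      rw [show ((4:ℝ)/3) = (1:ℝ)/3 + 1 by norm_num, Real.rpow_add hθp, Real.rpow_one]
    rw [e2]
    field_simp
    ring
  · have h1 : Filter.Tendsto (fun t => θ t ^ ((1:ℝ)/3))
        (nhdsWithin a (Set.Ioo a b)) (nhds 0) := by
      have := hθlim.rpow_const (p := (1:ℝ)/3) (Or.inr (by norm_num))
      rwa [Real.zero_rpow (by norm_num)] at this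
    simpa using h1.const_mul 4
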